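/- arXiv:2010.02681 — 3 statements merged into one kernel-verified Lean document; each statement's English description precedes it below -/
import Mathlib

section
/- Harmonic-decay bound (Proposition 1, part 1, with the additive correction needed to make it precise): for every real b > 0 and all integers n ≥ 1 and r ≥ 1, Σ_{i=1}^{r} (n/i)/(b + n/i)² ≤ (n/b²)·log( (n + (r+1)b)/n ) + 1/(2b). -/
/-- Lower bound for the logarithm: `log((A+b)/A) ≥ b/(A + 3b/4)`. -/
lemma log_ratio_lb (A b : ℝ) (hA : 0 < A) (hb : 0 < b) :
    b / (A + 3 * b / 4) ≤ Real.log ((A + b) / A) := by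
  have hAb : 0 < A + b := by linarith
  have hx : (0:ℝ) < (A + b) / A := div_pos hAb hA
  set s : ℝ := Real.sqrt ((A + b) / A) with hs
  have hspos : 0 < s := Real.sqrt_pos.mpr hx
  have hlogeq : Real.log ((A + b) / A) = 2 * Real.log s := by
    rw [hs, Real.log_sqrt hx.le]; ring
  have h1 : 1 - s⁻¹ ≤ Real.log s := Real.one_sub_inv_le_log_of_pos hspos
  have hden : (0:ℝ) < 2 * A + b / 2 := by linarith
  have hkey : (2 * A + 3 * b / 2) / (2 * A + b / 2) ≤ s := by
    rw [hs]
    apply Real.le_sqrt_of_sq_le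
    rw [div_pow, div_le_div_iff₀ (by positivity) hA]
    nlinarith [mul_pos hb (mul_pos hb hb)]
  have hinv : s⁻¹ ≤ (2 * A + b / 2) / (2 * A + 3 * b / 2) := by
    rw [inv_eq_one_div, div_le_div_iff₀ hspos (by linarith)]
    calc (1:ℝ) * (2 * A + 3 * b / 2)
        = ((2 * A + 3 * b / 2) / (2 * A + b / 2)) * (2 * A + b / 2) := by field_simp
      _ ≤ s * (2 * A + b / 2) := by apply mul_le_mul_of_nonneg_right hkey; positivity
      _ = (2 * A + b / 2) * s := by ring
  have h3 : b / (A + 3 * b / 4) = 2 * (1 - (2 * A + b / 2) / (2 * A + 3 * b / 2)) := by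
    field_simp; ring
  rw [hlogeq, h3]; linarith

/-- Per-term bound: `n·x/(bx+n)² ≤ (n/b²)(log(b(x+1)+n) − log(bx+n)) + (1/2b)(1/x − 1/(x+1))`. -/
lemma per_term (b n x : ℝ) (hb : 0 < b) (hn : 1 ≤ n) (hx : 1 ≤ x) :
    n * x / (b * x + n) ^ 2
      ≤ n / b ^ 2 * (Real.log (b * (x + 1) + n) - Real.log (b * x + n))
        + 1 / (2 * b) * (1 / x - 1 / (x + 1)) := by
  have hx0 : 0 < x := by linarith
  have hn0 : 0 < n := by linarith
  have hA : 0 < b * x + n := by positivity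
  have hlog : Real.log (b * (x + 1) + n) - Real.log (b * x + n)
      = Real.log (((b * x + n) + b) / (b * x + n)) := by
    rw [Real.log_div (by positivity) (by positivity)]
    have : b * (x + 1) + n = (b * x + n) + b := by ring
    rw [this]
  rw [hlog]
  have hlb := log_ratio_lb (b * x + n) b hA hb
  have hmono : n / b ^ 2 * (b / ((b * x + n) + 3 * b / 4))
      ≤ n / b ^ 2 * Real.log (((b * x + n) + b) / (b * x + n)) := by
    apply mul_le_mul_of_nonneg_left hlb; positivity
  have hQ : 0 ≤ x ^ 3 * b * ((b - 3 * n / 4) ^ 2 + 23 / 16 * n ^ 2)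
      + (n ^ 3 + 2 * n ^ 3 * x + 2 * n ^ 3 * x ^ 2 + 3 / 4 * b * n ^ 2 + 3 * b * n ^ 2 * x
        + 2 * b * n ^ 2 * x ^ 2 + 3 / 2 * b ^ 2 * n * x + 3 / 2 * b ^ 2 * n * x ^ 2
        + 3 / 4 * b ^ 3 * x ^ 2) := by positivity
  have e1 : n / (b * ((b * x + n) + 3 * b / 4)) = n / b ^ 2 * (b / ((b * x + n) + 3 * b / 4)) := by
    field_simp
  have h2 : 1 / (2 * b * x * (x + 1)) = 1 / (2 * b) * (1 / x - 1 / (x + 1)) := by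
    field_simp; ring
  have hmain : n * x / (b * x + n) ^ 2
      ≤ n / (b * ((b * x + n) + 3 * b / 4)) + 1 / (2 * b * x * (x + 1)) := by
    rw [div_add_div _ _ (by positivity) (by positivity),
      div_le_div_iff₀ (by positivity) (by positivity)]
    nlinarith [mul_nonneg hb.le hQ]
  rw [e1, h2] at hmain
  linarith

/-- Harmonic-decay bound (Proposition 1, part 1, with additive correction):
for every `b > 0` and integers `n, r ≥ 1`,
`∑_{i=1}^{r} (n/i)/(b + n/i)² ≤ (n/b²)·log((n + (r+1)b)/n) + 1/(2b)`. -/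
theorem harmonic_decay_bound (b : ℝ) (hb : 0 < b) (n r : ℕ) (hn : 1 ≤ n) (hr : 1 ≤ r) :
    ∑ i ∈ Finset.Icc 1 r, ((n : ℝ) / i) / (b + (n : ℝ) / i) ^ 2
      ≤ ((n : ℝ) / b ^ 2) * Real.log (((n : ℝ) + ((r : ℝ) + 1) * b) / n) + 1 / (2 * b) := by
  have hn0 : (1:ℝ) ≤ (n:ℝ) := by exact_mod_cast hn
  have hnpos : (0:ℝ) < (n:ℝ) := by linarith
  -- rewrite each summand and bound it
  have hsum : ∑ i ∈ Finset.Icc 1 r, ((n : ℝ) / i) / (b + (n : ℝ) / i) ^ 2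
      ≤ ∑ i ∈ Finset.Icc 1 r,
          ((n:ℝ) / b ^ 2 * (Real.log (b * ((i:ℝ) + 1) + n) - Real.log (b * (i:ℝ) + n))
            + 1 / (2 * b) * (1 / (i:ℝ) - 1 / ((i:ℝ) + 1))) := by
    apply Finset.sum_le_sum
    intro i hi
    have hi1 : 1 ≤ i := (Finset.mem_Icc.mp hi).1
    have hix : (1:ℝ) ≤ (i:ℝ) := by exact_mod_cast hi1
    have hipos : (0:ℝ) < (i:ℝ) := by linarith
    have heq : ((n : ℝ) / i) / (b + (n : ℝ) / i) ^ 2 = (n:ℝ) * i / (b * i + n) ^ 2 := by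
      have hbn : (0:ℝ) < b * i + n := by positivity
      field_simp
    rw [heq]
    exact per_term b n i hb hn0 hix
  refine hsum.trans ?_
  rw [Finset.sum_add_distrib, ← Finset.mul_sum, ← Finset.mul_sum]
  -- telescoping sums
  have hIcc : ∀ g : ℕ → ℝ, ∑ i ∈ Finset.Icc 1 r, g i = ∑ j ∈ Finset.range r, g (j + 1) := by
    intro g
    rw [← Finset.Ico_add_one_right_eq_Icc, Finset.sum_Ico_eq_sum_range]
    simp [add_comm]
  have htel1 : ∑ i ∈ Finset.Icc 1 r,
      (Real.log (b * ((i:ℝ) + 1) + n) - Real.log (b * (i:ℝ) + n))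
      = Real.log (b * ((r:ℝ) + 1) + n) - Real.log (b + n) := by
    rw [hIcc]
    have hpt : ∀ j ∈ Finset.range r,
        Real.log (b * (((j + 1 : ℕ):ℝ) + 1) + n) - Real.log (b * ((j + 1 : ℕ):ℝ) + n)
        = (fun k : ℕ => Real.log (b * ((k:ℝ) + 1) + n)) (j + 1)
          - (fun k : ℕ => Real.log (b * ((k:ℝ) + 1) + n)) j := by
      intro j _
      simp only
      push_cast
      ring_nf
    refine (Finset.sum_congr rfl hpt).trans ((Finset.sum_range_sub (fun k : ℕ => Real.log (b * ((k:ℝ) + 1) + n)) r).trans ?_)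
    norm_num
  have htel2 : ∑ i ∈ Finset.Icc 1 r, (1 / (i:ℝ) - 1 / ((i:ℝ) + 1))
      = 1 - 1 / ((r:ℝ) + 1) := by
    rw [hIcc]
    have hpt : ∀ j ∈ Finset.range r,
        1 / ((j + 1 : ℕ):ℝ) - 1 / (((j + 1 : ℕ):ℝ) + 1)
        = (fun k : ℕ => -(1 / ((k:ℝ) + 1))) (j + 1) - (fun k : ℕ => -(1 / ((k:ℝ) + 1))) j := by
      intro j _
      simp only
      push_cast
      ring
    refine (Finset.sum_congr rfl hpt).trans ((Finset.sum_range_sub (fun k : ℕ => -(1 / ((k:ℝ) + 1))) r).trans ?_)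
    push_cast
    ring
  rw [htel1, htel2]
  have hlogmono : Real.log (b * ((r:ℝ) + 1) + n) - Real.log (b + n)
      ≤ Real.log (((n:ℝ) + ((r:ℝ) + 1) * b) / n) := by
    rw [Real.log_div (by positivity) (by positivity)]
    have h1 : (n:ℝ) + ((r:ℝ) + 1) * b = b * ((r:ℝ) + 1) + n := by ring
    rw [h1]
    have : Real.log (n:ℝ) ≤ Real.log (b + n) :=
      Real.log_le_log (by positivity) (by linarith)
    linarith
  have hb2 : (0:ℝ) ≤ (n:ℝ) / b ^ 2 := by positivity
  have h12b : (0:ℝ) < 1 / (2 * b) := by positivity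
  have hr1 : (0:ℝ) < 1 / ((r:ℝ) + 1) := by positivity
  nlinarith [mul_le_mul_of_nonneg_left hlogmono hb2]
end

section
/- Polynomial-decay bound (Proposition 1, part 2, with the additive correction needed to make it precise): for every real b > 0, every real a > 1/2, and all integers n ≥ 1 and r ≥ 1, Σ_{i=1}^{r} (n·i^{−2a})/(b + n·i^{−2a})² ≤ (C_a/(2ab))·(n/b)^{1/(2a)} + 1/(2b), where C_a := ∫_0^∞ u^{1/(2a)}/(1+u)² du, which is finite since 2a > 1. -/
open MeasureTheory Set Real

/-- The summand function. -/
noncomputable def polyDecayF (b a : ℝ) (n : ℕ) : ℝ → ℝ :=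
  fun x => (n : ℝ) * x ^ (-(2 * a)) / (b + (n : ℝ) * x ^ (-(2 * a))) ^ 2

private lemma frac_le_frac {b s t : ℝ} (hb : 0 < b) (hs : 0 ≤ s) (ht : 0 ≤ t)
    (h : (s - t) * (b ^ 2 - s * t) ≤ 0) :
    s / (b + s) ^ 2 ≤ t / (b + t) ^ 2 := by
  rw [div_le_div_iff₀ (by positivity) (by positivity)]
  nlinarith

private lemma frac_le_max {b s : ℝ} (hb : 0 < b) (hs : 0 ≤ s) :
    s / (b + s) ^ 2 ≤ 1 / (4 * b) := by
  rw [div_le_div_iff₀ (by positivity) (by positivity)]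
  nlinarith [sq_nonneg (b - s)]

section PDF

variable {b a : ℝ} {n : ℕ} (hb : 0 < b) (ha : 1 / 2 < a) (hn : 1 ≤ n)

private lemma pdf_nonneg (hn : 1 ≤ n) {x : ℝ} (hx : 0 ≤ x) : 0 ≤ polyDecayF b a n x := by
  have hn0 : (0:ℝ) ≤ n := Nat.cast_nonneg n
  exact div_nonneg (mul_nonneg hn0 (rpow_nonneg hx _)) (sq_nonneg _)

private lemma pdf_le_max (hb : 0 < b) {x : ℝ} (hx : 0 ≤ x) : polyDecayF b a n x ≤ 1 / (4 * b) :=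
  frac_le_max hb (mul_nonneg (Nat.cast_nonneg n) (rpow_nonneg hx _))

private lemma s_ge (hb : 0 < b) (ha : 1 / 2 < a) (hn : 1 ≤ n) {x : ℝ} (hx : 0 < x)
    (hxX : x ≤ ((n : ℝ) / b) ^ (1 / (2 * a))) : b ≤ (n : ℝ) * x ^ (-(2 * a)) := by
  have hn0 : (0:ℝ) < n := by exact_mod_cast hn
  have h2a : (0:ℝ) < 2 * a := by linarith
  have h1 : x ^ (2 * a) ≤ (n : ℝ) / b := by
    calc x ^ (2 * a) ≤ (((n : ℝ) / b) ^ (1 / (2 * a))) ^ (2 * a) :=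
          rpow_le_rpow hx.le hxX h2a.le
    _ = (n : ℝ) / b := by
        rw [← Real.rpow_mul (by positivity), one_div, inv_mul_cancel₀ h2a.ne', Real.rpow_one]
  have h2 : 0 < x ^ (2 * a) := rpow_pos_of_pos hx _
  rw [Real.rpow_neg hx.le, ← div_eq_mul_inv, le_div_iff₀ h2]
  calc b * x ^ (2 * a) ≤ b * ((n : ℝ) / b) := by
        exact mul_le_mul_of_nonneg_left h1 hb.le
  _ = n := by field_simp

private lemma s_le (hb : 0 < b) (ha : 1 / 2 < a) (hn : 1 ≤ n) {x : ℝ} (hx : 0 < x)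
    (hxX : ((n : ℝ) / b) ^ (1 / (2 * a)) ≤ x) : (n : ℝ) * x ^ (-(2 * a)) ≤ b := by
  have hn0 : (0:ℝ) < n := by exact_mod_cast hn
  have h2a : (0:ℝ) < 2 * a := by linarith
  have h1 : (n : ℝ) / b ≤ x ^ (2 * a) := by
    calc (n : ℝ) / b = (((n : ℝ) / b) ^ (1 / (2 * a))) ^ (2 * a) := by
          rw [← Real.rpow_mul (by positivity), one_div, inv_mul_cancel₀ h2a.ne', Real.rpow_one]
    _ ≤ x ^ (2 * a) := rpow_le_rpow (by positivity) hxX h2a.le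
  have h2 : 0 < x ^ (2 * a) := rpow_pos_of_pos hx _
  rw [Real.rpow_neg hx.le, ← div_eq_mul_inv, div_le_iff₀ h2]
  calc (n : ℝ) = b * ((n : ℝ) / b) := by field_simp
  _ ≤ b * x ^ (2 * a) := mul_le_mul_of_nonneg_left h1 hb.le

private lemma s_anti (hn : 1 ≤ n) (ha : 1 / 2 < a) {x y : ℝ} (hx : 0 < x) (hxy : x ≤ y) :
    (n : ℝ) * y ^ (-(2 * a)) ≤ (n : ℝ) * x ^ (-(2 * a)) :=
  mul_le_mul_of_nonneg_left (rpow_le_rpow_of_nonpos hx hxy (by linarith)) (Nat.cast_nonneg n)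

private lemma pdf_mono (hb : 0 < b) (ha : 1 / 2 < a) (hn : 1 ≤ n) {K : ℝ}
    (hK : K ≤ ((n : ℝ) / b) ^ (1 / (2 * a))) : MonotoneOn (polyDecayF b a n) (Icc 1 K) := by
  intro x hx y hy hxy
  have hx0 : (0:ℝ) < x := lt_of_lt_of_le one_pos hx.1
  have hy0 : (0:ℝ) < y := lt_of_lt_of_le one_pos hy.1
  have hsb : b ≤ (n : ℝ) * y ^ (-(2 * a)) := s_ge hb ha hn hy0 (hy.2.trans hK)
  have hst : (n : ℝ) * y ^ (-(2 * a)) ≤ (n : ℝ) * x ^ (-(2 * a)) := s_anti hn ha hx0 hxy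
  have hsx : 0 ≤ (n : ℝ) * x ^ (-(2 * a)) :=
    mul_nonneg (Nat.cast_nonneg n) (rpow_nonneg hx0.le _)
  have hsy : 0 ≤ (n : ℝ) * y ^ (-(2 * a)) :=
    mul_nonneg (Nat.cast_nonneg n) (rpow_nonneg hy0.le _)
  have hbb : b ^ 2 ≤ ((n : ℝ) * x ^ (-(2 * a))) * ((n : ℝ) * y ^ (-(2 * a))) := by
    nlinarith [mul_le_mul hsb (hsb.trans hst) hb.le hsy]
  exact frac_le_frac hb hsx hsy
    (mul_nonpos_of_nonneg_of_nonpos (sub_nonneg.2 hst) (by linarith))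

private lemma pdf_anti (hb : 0 < b) (ha : 1 / 2 < a) (hn : 1 ≤ n) {L M : ℝ} (hL : 0 < L)
    (hXL : ((n : ℝ) / b) ^ (1 / (2 * a)) ≤ L) : AntitoneOn (polyDecayF b a n) (Icc L M) := by
  intro x hx y hy hxy
  have hx0 : (0:ℝ) < x := lt_of_lt_of_le hL hx.1
  have hy0 : (0:ℝ) < y := lt_of_lt_of_le hL hy.1
  have hsb : (n : ℝ) * x ^ (-(2 * a)) ≤ b := s_le hb ha hn hx0 (hXL.trans hx.1)
  have hst : (n : ℝ) * y ^ (-(2 * a)) ≤ (n : ℝ) * x ^ (-(2 * a)) := s_anti hn ha hx0 hxy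
  have hsx : 0 ≤ (n : ℝ) * x ^ (-(2 * a)) :=
    mul_nonneg (Nat.cast_nonneg n) (rpow_nonneg hx0.le _)
  have hsy : 0 ≤ (n : ℝ) * y ^ (-(2 * a)) :=
    mul_nonneg (Nat.cast_nonneg n) (rpow_nonneg hy0.le _)
  have hbb : ((n : ℝ) * y ^ (-(2 * a))) * ((n : ℝ) * x ^ (-(2 * a))) ≤ b ^ 2 := by
    nlinarith [mul_le_mul (hst.trans hsb) hsb hsx hb.le]
  exact frac_le_frac hb hsy hsx
    (mul_nonpos_of_nonpos_of_nonneg (sub_nonpos.2 hst) (by linarith))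

private lemma pdf_measurable : Measurable (polyDecayF b a n) := by
  unfold polyDecayF
  fun_prop

private lemma pdf_integrable (hb : 0 < b) (ha : 1 / 2 < a) (hn : 1 ≤ n) :
    IntegrableOn (polyDecayF b a n) (Ioi (0:ℝ)) := by
  have hn0 : (0:ℝ) < n := by exact_mod_cast hn
  have h1 : IntegrableOn (polyDecayF b a n) (Ioc (0:ℝ) 1) := by
    refine Integrable.mono' (integrable_const (1 / (4 * b)))
      pdf_measurable.aestronglyMeasurable.restrict ?_
    filter_upwards [ae_restrict_mem measurableSet_Ioc] with x hx
    rw [Real.norm_eq_abs, abs_of_nonneg (pdf_nonneg hn hx.1.le)]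
    exact pdf_le_max hb hx.1.le
  have h2 : IntegrableOn (polyDecayF b a n) (Ioi (1:ℝ)) := by
    have hint : IntegrableOn (fun x : ℝ => (n : ℝ) / b ^ 2 * x ^ (-(2 * a))) (Ioi (1:ℝ)) :=
      (integrableOn_Ioi_rpow_of_lt (by linarith) one_pos).const_mul _
    refine Integrable.mono' hint pdf_measurable.aestronglyMeasurable.restrict ?_
    filter_upwards [ae_restrict_mem measurableSet_Ioi] with x hx
    have hx0 : (0:ℝ) < x := lt_trans one_pos hx
    have hs : 0 ≤ (n : ℝ) * x ^ (-(2 * a)) :=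
      mul_nonneg (Nat.cast_nonneg n) (rpow_nonneg hx0.le _)
    rw [Real.norm_eq_abs, abs_of_nonneg (pdf_nonneg hn hx0.le)]
    have key : polyDecayF b a n x ≤ ((n : ℝ) * x ^ (-(2 * a))) / b ^ 2 := by
      unfold polyDecayF
      rw [div_le_div_iff₀ (by positivity) (by positivity)]
      nlinarith [mul_nonneg hs hs, mul_nonneg (mul_nonneg hs hs) hs, mul_nonneg hs hb.le]
    calc polyDecayF b a n x ≤ ((n : ℝ) * x ^ (-(2 * a))) / b ^ 2 := key
    _ = (n : ℝ) / b ^ 2 * x ^ (-(2 * a)) := by ring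
  have := h1.union h2
  rwa [Ioc_union_Ioi_eq_Ioi (le_of_lt one_pos)] at this

private lemma pdf_integral_value (hb : 0 < b) (ha : 1 / 2 < a) (hn : 1 ≤ n) :
    ∫ x in Ioi (0:ℝ), polyDecayF b a n x
      = (∫ u in Ioi (0:ℝ), u ^ (1 / (2 * a)) / (1 + u) ^ 2) / (2 * a * b)
          * ((n : ℝ) / b) ^ (1 / (2 * a)) := by
  have ha0 : 0 < a := by linarith
  have h2a : (0:ℝ) < 2 * a := by linarith
  have hn0 : (0:ℝ) < n := by exact_mod_cast hn
  set c : ℝ := 1 / (2 * a) with hc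
  have hc0 : 0 < c := by positivity
  -- Step A : C = ∫ x^(-c)/(1+x)^2
  have hA : (∫ u in Ioi (0:ℝ), u ^ c / (1 + u) ^ 2)
      = ∫ x in Ioi (0:ℝ), x ^ (-c) / (1 + x) ^ 2 := by
    rw [← integral_comp_rpow_Ioi (fun u => u ^ c / (1 + u) ^ 2) (p := -1) (by norm_num)]
    refine setIntegral_congr_fun measurableSet_Ioi fun x hx => ?_
    have hx0 : (0:ℝ) < x := hx
    have hx1 : (0:ℝ) < 1 + x := by linarith
    have hxc : (0:ℝ) < x ^ c := rpow_pos_of_pos hx0 _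
    have e1 : x ^ ((-1:ℝ) - 1) = (x ^ 2)⁻¹ := by
      rw [show ((-1:ℝ) - 1) = -(2:ℝ) by norm_num, Real.rpow_neg hx0.le, Real.rpow_two]
    have e2 : (x ^ (-1:ℝ)) ^ c = (x ^ c)⁻¹ := by
      rw [Real.rpow_neg_one, Real.inv_rpow hx0.le]
    have e3 : (1 + x ^ (-1:ℝ)) = (1 + x) / x := by
      rw [Real.rpow_neg_one]; field_simp; ring
    rw [smul_eq_mul, e1, e2, e3, Real.rpow_neg hx0.le, abs_neg, abs_one, div_pow]
    field_simp
  -- Step B : substitution x = t^(-c)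
  have hmc : (-c : ℝ) ≠ 0 := (neg_lt_zero.2 hc0).ne
  have hB0 := (integral_comp_rpow_Ioi (polyDecayF b a n) (p := -c) hmc).symm
  have hB1 : (∫ x in Ioi (0:ℝ), (|(-c)| * x ^ (-c - 1)) • polyDecayF b a n (x ^ (-c)))
      = ∫ x in Ioi (0:ℝ), ((n : ℝ) * c) * (x ^ (-c) / (b + n * x) ^ 2) := by
    refine setIntegral_congr_fun measurableSet_Ioi fun x hx => ?_
    have hx0 : (0:ℝ) < x := hx
    have ha' : a ≠ 0 := ha0.ne'
    have hxp : (x ^ (-c)) ^ (-(2 * a)) = x := by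
      rw [← Real.rpow_mul hx0.le, show (-c) * (-(2 * a)) = 1 by rw [hc]; field_simp,
        Real.rpow_one]
    have hxx : x ^ (-c - 1) * x = x ^ (-c) := by
      rw [show (-c - 1 : ℝ) = -c + -1 by ring, Real.rpow_add hx0, Real.rpow_neg_one]
      field_simp
    unfold polyDecayF
    rw [hxp, smul_eq_mul, abs_neg, abs_of_pos hc0, ← hxx]
    ring
  have hB : (∫ x in Ioi (0:ℝ), polyDecayF b a n x)
      = ((n : ℝ) * c) * ∫ x in Ioi (0:ℝ), x ^ (-c) / (b + n * x) ^ 2 := by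
    calc (∫ x in Ioi (0:ℝ), polyDecayF b a n x)
        = ∫ x in Ioi (0:ℝ), (|(-c)| * x ^ (-c - 1)) • polyDecayF b a n (x ^ (-c)) := hB0
    _ = ∫ x in Ioi (0:ℝ), ((n : ℝ) * c) * (x ^ (-c) / (b + n * x) ^ 2) := hB1
    _ = ((n : ℝ) * c) * ∫ x in Ioi (0:ℝ), x ^ (-c) / (b + n * x) ^ 2 :=
        integral_const_mul _ _
  -- Step C : scaling x = (b/n) u
  have hbn : (0:ℝ) < b / n := by positivity
  have hC0 := integral_comp_mul_left_Ioi (fun y => y ^ (-c) / (b + n * y) ^ 2) 0 hbn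
  rw [mul_zero] at hC0
  beta_reduce at hC0
  have hC1 : (∫ x in Ioi (0:ℝ), (b / n * x) ^ (-c) / (b + n * (b / n * x)) ^ 2)
      = ∫ x in Ioi (0:ℝ), ((b / n) ^ (-c) / b ^ 2) * (x ^ (-c) / (1 + x) ^ 2) := by
    refine setIntegral_congr_fun measurableSet_Ioi fun x hx => ?_
    have hx0 : (0:ℝ) < x := hx
    rw [Real.mul_rpow hbn.le hx0.le,
      show b + (n : ℝ) * (b / n * x) = b * (1 + x) by field_simp, mul_pow]
    have h1x : (0:ℝ) < 1 + x := by linarith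
    field_simp
  have hC : (∫ x in Ioi (0:ℝ), x ^ (-c) / (b + n * x) ^ 2)
      = (b / n) * (((b / n) ^ (-c) / b ^ 2) * ∫ x in Ioi (0:ℝ), x ^ (-c) / (1 + x) ^ 2) := by
    rw [← integral_const_mul, ← hC1, hC0, smul_eq_mul, ← mul_assoc,
      mul_inv_cancel₀ (ne_of_gt hbn), one_mul]
  have hflip : ((b / n : ℝ)) ^ (-c) = ((n : ℝ) / b) ^ c := by
    rw [Real.rpow_neg hbn.le, ← Real.inv_rpow hbn.le, inv_div]
  rw [hB, hC, hA, hflip, hc]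
  have hb' : b ≠ 0 := hb.ne'
  have hn' : (n:ℝ) ≠ 0 := hn0.ne'
  have ha' : a ≠ 0 := ha0.ne'
  field_simp

end PDF

/-- Polynomial-decay bound (Proposition 1, part 2, with additive correction):
for every `b > 0`, `a > 1/2` and integers `n, r ≥ 1`,
`∑_{i=1}^{r} (n·i^{−2a})/(b + n·i^{−2a})² ≤ (C_a/(2ab))·(n/b)^{1/(2a)} + 1/(2b)`,
where `C_a = ∫_0^∞ u^{1/(2a)}/(1+u)² du`. -/
theorem polynomial_decay_bound (b a : ℝ) (hb : 0 < b) (ha : 1 / 2 < a)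
    (n r : ℕ) (hn : 1 ≤ n) (hr : 1 ≤ r) :
    ∑ i ∈ Finset.Icc 1 r, ((n : ℝ) * (i : ℝ) ^ (-(2 * a))) / (b + (n : ℝ) * (i : ℝ) ^ (-(2 * a))) ^ 2
      ≤ ((∫ u in Set.Ioi (0 : ℝ), u ^ (1 / (2 * a)) / (1 + u) ^ 2) / (2 * a * b)) *
          ((n : ℝ) / b) ^ (1 / (2 * a)) + 1 / (2 * b) := by
  have hn0 : (0:ℝ) < n := by exact_mod_cast hn
  set f := polyDecayF b a n with hfdef
  have hsummand : ∀ i : ℕ,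
      ((n : ℝ) * (i : ℝ) ^ (-(2 * a))) / (b + (n : ℝ) * (i : ℝ) ^ (-(2 * a))) ^ 2 = f i :=
    fun i => rfl
  simp only [hsummand]
  rw [← pdf_integral_value hb ha hn, ← hfdef]
  set X : ℝ := ((n : ℝ) / b) ^ (1 / (2 * a)) with hX
  have hX0 : 0 < X := rpow_pos_of_pos (by positivity) _
  set m : ℕ := ⌊X⌋₊ with hm
  have hmX : (m : ℝ) ≤ X := Nat.floor_le hX0.le
  have hXm : X < (m : ℝ) + 1 := Nat.lt_floor_add_one X
  have hIcc : Finset.Icc 1 r = Finset.Ioc 0 r := by rw [← Finset.Icc_add_one_left_eq_Ioc]; rfl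
  rw [hIcc]
  have hae : 0 ≤ᵐ[volume.restrict (Ioi (0:ℝ))] f := by
    filter_upwards [ae_restrict_mem measurableSet_Ioi] with x hx
    exact pdf_nonneg hn (le_of_lt hx)
  have hint : IntegrableOn f (Ioi (0:ℝ)) := pdf_integrable hb ha hn
  have hquarter : 1 / (4 * b) + 1 / (4 * b) = 1 / (2 * b) := by field_simp; ring
  -- monotone-part claim
  have claimA : ∀ j : ℕ, (j : ℝ) ≤ X →
      ∑ i ∈ Finset.Ioc 0 j, f i ≤ (∫ x in Ioc (1:ℝ) (j : ℝ), f x) + 1 / (4 * b) := by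
    intro j hj
    rcases Nat.eq_zero_or_pos j with rfl | hj1
    · simp only [Finset.Ioc_self, Finset.sum_empty, Nat.cast_zero]
      rw [Set.Ioc_eq_empty (by norm_num), Measure.restrict_empty, integral_zero_measure]
      positivity
    · have hmono : MonotoneOn f (Icc (1:ℝ) ((j:ℕ) : ℝ)) := pdf_mono hb ha hn hj
      have hmono' : MonotoneOn f (Icc (((1:ℕ)):ℝ) ((j:ℕ) : ℝ)) := by
        simpa using hmono
      have h1 : ∑ i ∈ Finset.Ico 1 j, f i ≤ ∫ x in ((1:ℕ) : ℝ)..((j:ℕ) : ℝ), f x :=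
        hmono'.sum_le_integral_Ico hj1
      have hsplit : ∑ i ∈ Finset.Ioc 0 j, f i = (∑ i ∈ Finset.Ico 1 j, f i) + f j := by
        rw [← Finset.Icc_add_one_left_eq_Ioc, ← Finset.Ico_add_one_right_eq_Icc, zero_add, Finset.sum_Ico_succ_top (a := 1) hj1]
      rw [hsplit]
      have h2 : (∫ x in ((1:ℕ) : ℝ)..((j:ℕ) : ℝ), f x) = ∫ x in Ioc (1:ℝ) (j : ℝ), f x := by
        rw [intervalIntegral.integral_of_le (by exact_mod_cast hj1)]
        norm_num
      have h3 : f j ≤ 1 / (4 * b) := pdf_le_max hb (Nat.cast_nonneg j)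
      have := add_le_add (h2 ▸ h1) h3
      simpa using this
  rcases le_or_gt r m with hrm | hmr
  · -- Case 1 : r ≤ m, everything in the monotone regime
    have hjX : (r : ℝ) ≤ X := le_trans (by exact_mod_cast hrm) hmX
    calc ∑ i ∈ Finset.Ioc 0 r, f i ≤ (∫ x in Ioc (1:ℝ) (r : ℝ), f x) + 1 / (4 * b) :=
          claimA r hjX
    _ ≤ (∫ x in Ioi (0:ℝ), f x) + 1 / (2 * b) := by
        have hsub : Ioc (1:ℝ) (r : ℝ) ⊆ Ioi (0:ℝ) := fun x hx => lt_trans one_pos hx.1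
        have hmono := setIntegral_mono_set hint hae hsub.eventuallyLE
        have hhalf : 1 / (4 * b) ≤ 1 / (2 * b) := by
          rw [div_le_div_iff₀ (by positivity) (by positivity)]; linarith
        linarith
  · -- Case 2 : m < r
    have hm1r : m + 1 ≤ r := hmr
    have hXm1 : X ≤ ((m + 1 : ℕ) : ℝ) := by push_cast; linarith
    have hanti : AntitoneOn f (Icc (((m + 1 : ℕ)) : ℝ) ((r : ℕ) : ℝ)) :=
      pdf_anti hb ha hn (by positivity) hXm1
    have hsplit : ∑ i ∈ Finset.Ioc 0 r, f i
        = (∑ i ∈ Finset.Ioc 0 m, f i) + (f ((m:ℕ) + 1)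
            + ∑ i ∈ Finset.Ioc (m + 1) r, f i) := by
      rw [← Finset.sum_Ioc_consecutive (fun i : ℕ => f i) (Nat.zero_le m) (le_of_lt hmr)]
      congr 1
      rw [← Finset.sum_Ioc_consecutive (fun i : ℕ => f i) (Nat.le_succ m) hm1r]
      congr 1
      rw [Nat.Ioc_succ_singleton, Finset.sum_singleton]
      norm_num
    have htail : ∑ i ∈ Finset.Ioc (m + 1) r, f i ≤ ∫ x in Ioc ((m:ℝ) + 1) (r : ℝ), f x := by
      have h1 : ∑ i ∈ Finset.Ico (m + 1) r, f ((i + 1 : ℕ) : ℝ)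
          ≤ ∫ x in (((m + 1 : ℕ)) : ℝ)..((r:ℕ) : ℝ), f x := hanti.sum_le_integral_Ico hm1r
      have h2 : ∑ i ∈ Finset.Ioc (m + 1) r, f i
          = ∑ i ∈ Finset.Ico (m + 1) r, f ((i + 1 : ℕ) : ℝ) := by
        rw [Finset.sum_Ico_add' (fun i : ℕ => f i) (m + 1) r 1, ← Finset.Icc_add_one_left_eq_Ioc,
          Finset.Ico_add_one_right_eq_Icc]
      have h3 : (∫ x in (((m + 1 : ℕ)) : ℝ)..((r:ℕ) : ℝ), f x)
          = ∫ x in Ioc ((m:ℝ) + 1) (r : ℝ), f x := by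
        rw [intervalIntegral.integral_of_le (by exact_mod_cast hm1r)]
        push_cast
        norm_num
      rw [h2, ← h3]
      exact h1
    have hmid : f ((m:ℕ) + 1) ≤ 1 / (4 * b) := pdf_le_max hb (by positivity)
    have hheadA : ∑ i ∈ Finset.Ioc 0 m, f i ≤ (∫ x in Ioc (1:ℝ) (m : ℝ), f x) + 1 / (4 * b) :=
      claimA m hmX
    -- combine the two integrals
    have hunion : (∫ x in Ioc (1:ℝ) (m : ℝ), f x) + (∫ x in Ioc ((m:ℝ) + 1) (r : ℝ), f x)
        ≤ ∫ x in Ioi (0:ℝ), f x := by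
      have hdisj : Disjoint (Ioc (1:ℝ) (m : ℝ)) (Ioc ((m:ℝ) + 1) (r : ℝ)) := by
        apply Set.disjoint_left.2
        intro x hx hx'
        have := hx.2
        have := hx'.1
        linarith
      have hsub : Ioc (1:ℝ) (m : ℝ) ∪ Ioc ((m:ℝ) + 1) (r : ℝ) ⊆ Ioi (0:ℝ) := by
        intro x hx
        rcases hx with hx | hx
        · exact lt_trans one_pos hx.1
        · have h0 : (0:ℝ) < (m:ℝ) + 1 := by positivity
          exact lt_trans h0 hx.1
      have h1 : (∫ x in Ioc (1:ℝ) (m : ℝ), f x) + (∫ x in Ioc ((m:ℝ) + 1) (r : ℝ), f x)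
          = ∫ x in (Ioc (1:ℝ) (m : ℝ) ∪ Ioc ((m:ℝ) + 1) (r : ℝ)), f x :=
        (setIntegral_union hdisj measurableSet_Ioc
          (hint.mono_set (fun x hx => hsub (Or.inl hx)))
          (hint.mono_set (fun x hx => hsub (Or.inr hx)))).symm
      rw [h1]
      exact setIntegral_mono_set hint hae hsub.eventuallyLE
    calc (∑ i ∈ Finset.Ioc 0 r, f i)
        = (∑ i ∈ Finset.Ioc 0 m, f i) + (f ((m:ℕ) + 1) + ∑ i ∈ Finset.Ioc (m + 1) r, f i) :=
          hsplit
    _ ≤ ((∫ x in Ioc (1:ℝ) (m : ℝ), f x) + 1 / (4 * b))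
          + (1 / (4 * b) + ∫ x in Ioc ((m:ℝ) + 1) (r : ℝ), f x) := by
        gcongr
    _ = ((∫ x in Ioc (1:ℝ) (m : ℝ), f x) + (∫ x in Ioc ((m:ℝ) + 1) (r : ℝ), f x))
          + 1 / (2 * b) := by rw [← hquarter]; ring
    _ ≤ (∫ x in Ioi (0:ℝ), f x) + 1 / (2 * b) := by linarith
end

section
/- Exponential-decay bound (Proposition 1, part 3, with the additive correction needed to make it precise): for every real b > 0, every real a > 0, and all integers n ≥ 1 and r ≥ 1, Σ_{i=1}^{r} (n·e^{−ai})/(b + n·e^{−ai})² ≤ (1/a)·( 1/(b + n·e^{−a(r+1)}) − 1/(b + n) ) + 1/(2b). -/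
private lemma expdecay_sinh {a : ℝ} (ha : 0 < a) :
    2 * a ≤ Real.exp a - Real.exp (-a) := by
  have h := (Real.self_lt_sinh_iff (x := a)).mpr ha
  rw [Real.sinh_eq] at h
  linarith

/-- Forward bound: if `b ≤ u·e^{-a}`, the summand at `u` is at most the
"integral" over the next unit interval. -/
private lemma expdecay_lemA {b a u : ℝ} (hb : 0 < b) (ha : 0 < a) (hu : 0 < u)
    (h : b ≤ u * Real.exp (-a)) :
    u / (b + u) ^ 2 ≤ (1 / a) * (1 / (b + u * Real.exp (-a)) - 1 / (b + u)) := by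
  set s := Real.exp (-a) with hs
  have hs0 : 0 < s := Real.exp_pos _
  have hse : s * Real.exp a = 1 := by
    rw [hs, ← Real.exp_add]; simp
  have hea : 0 < Real.exp a := Real.exp_pos _
  have hsinh := expdecay_sinh ha
  -- key algebraic inequality
  have key : a * (b + u * s) ≤ (1 - s) * (b + u) := by
    rcases le_or_gt (1 - s - a) 0 with hc | hc
    · -- use b ≤ u * s ; 1 - s^2 - 2*a*s ≥ 0
      have h1 : 0 ≤ 1 - s ^ 2 - 2 * a * s := by
        nlinarith [mul_pos hs0 hea]
      nlinarith [mul_le_mul_of_nonpos_right h hc]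
    · have h2 : 0 ≤ 1 - s - a * s := by nlinarith
      nlinarith
  have hbu : 0 < b + u := by linarith
  have hbv : 0 < b + u * s := by positivity
  have hrw : 1 / (b + u * s) - 1 / (b + u) = (u - u * s) / ((b + u * s) * (b + u)) := by
    field_simp; ring
  rw [hrw, ← mul_div_assoc, div_mul_eq_mul_div, one_mul, div_div,
    div_le_div_iff₀ (by positivity) (by positivity)]
  nlinarith [mul_le_mul_of_nonneg_left key (le_of_lt (mul_pos hu hbu))]

/-- Backward bound: if `u·e^{a} ≤ b`, the summand at `u` is at most the
"integral" over the previous unit interval. -/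
private lemma expdecay_lemB {b a u : ℝ} (hb : 0 < b) (ha : 0 < a) (hu : 0 < u)
    (h : u * Real.exp a ≤ b) :
    u / (b + u) ^ 2 ≤ (1 / a) * (1 / (b + u) - 1 / (b + u * Real.exp a)) := by
  set e := Real.exp a with he
  have he1 : 1 + a ≤ e := by
    have := Real.add_one_le_exp a; linarith
  have he0 : 0 < e := Real.exp_pos _
  have hsinh := expdecay_sinh ha
  have hs0 : 0 < Real.exp (-a) := Real.exp_pos _
  have hse : Real.exp (-a) * e = 1 := by
    rw [he, ← Real.exp_add]; simp
  have hsinh' : 2 * a * e ≤ e ^ 2 - 1 := by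
    nlinarith [mul_le_mul_of_nonneg_right hsinh (le_of_lt he0)]
  have key : a * (b + u * e) ≤ (e - 1) * (b + u) := by
    rcases le_or_gt (e - 1 - a * e) 0 with hc | hc
    · -- use u * e ≤ b
      nlinarith [mul_le_mul_of_nonpos_right h hc, mul_pos hu he0]
    · nlinarith
  have hbu : 0 < b + u := by linarith
  have hbw : 0 < b + u * e := by positivity
  have hrw : 1 / (b + u) - 1 / (b + u * e) = (u * e - u) / ((b + u) * (b + u * e)) := by
    field_simp; ring
  rw [hrw, ← mul_div_assoc, div_mul_eq_mul_div, one_mul, div_div,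
    div_le_div_iff₀ (by positivity) (by positivity)]
  nlinarith [mul_le_mul_of_nonneg_left key (le_of_lt (mul_pos hu hbu))]

private lemma expdecay_lemC {b u : ℝ} (hb : 0 < b) (hu : 0 ≤ u) :
    u / (b + u) ^ 2 ≤ 1 / (4 * b) := by
  rw [div_le_div_iff₀ (by positivity) (by positivity)]
  nlinarith [sq_nonneg (b - u)]

private lemma expdecay_tel1 (F : ℕ → ℝ) (p : ℕ) :
    ∑ i ∈ Finset.Ioc 0 p, (F (i + 1) - F i) = F (p + 1) - F 1 := by
  induction p with
  | zero => simp
  | succ m ih => rw [Finset.sum_Ioc_succ_top (Nat.zero_le _), ih]; ring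

private lemma expdecay_tel2 (F : ℕ → ℝ) (q : ℕ) :
    ∀ r, q ≤ r → ∑ i ∈ Finset.Ioc q r, (F i - F (i - 1)) = F r - F q := by
  intro r
  induction r with
  | zero => intro h; interval_cases q; simp
  | succ m ih =>
    intro h
    rcases Nat.eq_or_lt_of_le h with h' | h'
    · rw [← h']; simp
    · have hq : q ≤ m := Nat.lt_succ_iff.mp h'
      rw [Finset.sum_Ioc_succ_top hq, ih hq]
      simp only [Nat.add_sub_cancel]
      ring

/-- Exponential-decay bound (Proposition 1, part 3, with additive correction):
for every `b > 0`, `a > 0` and integers `n, r ≥ 1`,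
`∑_{i=1}^{r} (n·e^{−ai})/(b + n·e^{−ai})² ≤ (1/a)·(1/(b + n·e^{−a(r+1)}) − 1/(b + n)) + 1/(2b)`. -/
theorem exponential_decay_bound (b a : ℝ) (hb : 0 < b) (ha : 0 < a)
    (n r : ℕ) (hn : 1 ≤ n) (hr : 1 ≤ r) :
    ∑ i ∈ Finset.Icc 1 r, ((n : ℝ) * Real.exp (-a * i)) / (b + (n : ℝ) * Real.exp (-a * i)) ^ 2
      ≤ (1 / a) * (1 / (b + (n : ℝ) * Real.exp (-a * ((r : ℝ) + 1))) - 1 / (b + (n : ℝ)))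
        + 1 / (2 * b) := by
  have hn0 : (0 : ℝ) < n := by exact_mod_cast hn
  set c : ℝ := Real.log ((n : ℝ) / b) / a with hc
  set K : ℤ := ⌊c⌋ with hK
  set p : ℕ := min r (K - 1).toNat with hp
  set q : ℕ := min r (K + 1).toNat with hq
  set F : ℕ → ℝ := fun i => 1 / a * (1 / (b + (n : ℝ) * Real.exp (-a * i))) with hF
  have hac : a * c = Real.log ((n : ℝ) / b) := by
    rw [hc]; field_simp
  -- threshold facts
  have hthr1 : ∀ t : ℝ, t ≤ c → b ≤ (n : ℝ) * Real.exp (-a * t) := by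
    intro t ht
    have h3 : Real.log (b / n) = - Real.log ((n : ℝ) / b) := by
      rw [← Real.log_inv]; congr 1; field_simp
    have h1 : Real.log (b / n) ≤ -a * t := by
      have h2 : a * t ≤ Real.log ((n : ℝ) / b) := by
        rw [← hac]; nlinarith
      rw [h3]; linarith
    have h4 := Real.exp_le_exp.mpr h1
    rw [Real.exp_log (by positivity)] at h4
    calc b = (n : ℝ) * (b / n) := by field_simp
      _ ≤ (n : ℝ) * Real.exp (-a * t) := by nlinarith
  have hthr2 : ∀ t : ℝ, c ≤ t → (n : ℝ) * Real.exp (-a * t) ≤ b := by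
    intro t ht
    have h3 : Real.log (b / n) = - Real.log ((n : ℝ) / b) := by
      rw [← Real.log_inv]; congr 1; field_simp
    have h1 : -a * t ≤ Real.log (b / n) := by
      have h2 : Real.log ((n : ℝ) / b) ≤ a * t := by
        rw [← hac]; nlinarith
      rw [h3]; linarith
    have h4 := Real.exp_le_exp.mpr h1
    rw [Real.exp_log (by positivity)] at h4
    calc (n : ℝ) * Real.exp (-a * t) ≤ (n : ℝ) * (b / n) := by nlinarith
      _ = b := by field_simp
  -- monotonicity of F
  have hFmono : ∀ i j : ℕ, i ≤ j → F i ≤ F j := by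
    intro i j hij
    have hexp : Real.exp (-a * j) ≤ Real.exp (-a * i) := by
      apply Real.exp_le_exp.mpr
      have : (i : ℝ) ≤ j := by exact_mod_cast hij
      nlinarith
    have h1 : 0 < b + (n : ℝ) * Real.exp (-a * j) := by positivity
    have h2 : b + (n : ℝ) * Real.exp (-a * j) ≤ b + (n : ℝ) * Real.exp (-a * i) := by nlinarith
    have := one_div_le_one_div_of_le h1 h2
    have ha' : 0 ≤ 1 / a := by positivity
    simp only [hF]
    nlinarith
  -- per-index bounds
  have hfwd : ∀ i ∈ Finset.Ioc 0 p,
      ((n : ℝ) * Real.exp (-a * i)) / (b + (n : ℝ) * Real.exp (-a * i)) ^ 2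
        ≤ F (i + 1) - F i := by
    intro i hi
    simp only [Finset.mem_Ioc] at hi
    obtain ⟨hi1, hi2⟩ := hi
    -- i ≤ p ≤ (K-1).toNat and i ≥ 1 so K-1 ≥ 1, hence i ≤ K - 1 ≤ c - 1
    have hiK : (i : ℤ) ≤ K - 1 := by omega
    have hcK : (K : ℝ) ≤ c := Int.floor_le c
    have hic : (i : ℝ) + 1 ≤ c := by
      have : ((i : ℤ) : ℝ) ≤ ((K - 1 : ℤ) : ℝ) := by exact_mod_cast hiK
      push_cast at this
      linarith
    have hbl : b ≤ (n : ℝ) * Real.exp (-a * i) * Real.exp (-a) := by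
      have := hthr1 ((i : ℝ) + 1) hic
      rw [mul_assoc, ← Real.exp_add] at *
      calc b ≤ (n : ℝ) * Real.exp (-a * ((i : ℝ) + 1)) := this
        _ = (n : ℝ) * Real.exp (-a * i + -a) := by ring_nf
    have := expdecay_lemA hb ha (by positivity : (0:ℝ) < (n : ℝ) * Real.exp (-a * i)) hbl
    refine le_trans this (le_of_eq ?_)
    simp only [hF]
    rw [mul_sub]
    congr 3
    push_cast
    rw [mul_assoc, ← Real.exp_add]
    ring_nf
  have hbwd : ∀ i ∈ Finset.Ioc q r,
      ((n : ℝ) * Real.exp (-a * i)) / (b + (n : ℝ) * Real.exp (-a * i)) ^ 2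
        ≤ F i - F (i - 1) := by
    intro i hi
    simp only [Finset.mem_Ioc] at hi
    obtain ⟨hi1, hi2⟩ := hi
    -- q < i ≤ r forces q = (K+1).toNat, so i ≥ K + 2
    have hiK : (K : ℤ) + 2 ≤ (i : ℤ) := by
      have := Int.self_le_toNat (K + 1)
      omega
    have hcK : c < (K : ℝ) + 1 := Int.lt_floor_add_one c
    have hic : c ≤ (i : ℝ) - 1 := by
      have : ((K : ℤ) : ℝ) + 2 ≤ ((i : ℤ) : ℝ) := by exact_mod_cast hiK
      push_cast at this
      linarith
    have hi1' : 1 ≤ i := by omega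
    have hbl : (n : ℝ) * Real.exp (-a * i) * Real.exp a ≤ b := by
      have := hthr2 ((i : ℝ) - 1) hic
      calc (n : ℝ) * Real.exp (-a * i) * Real.exp a
          = (n : ℝ) * Real.exp (-a * ((i : ℝ) - 1)) := by
            rw [mul_assoc, ← Real.exp_add]; ring_nf
        _ ≤ b := this
    have := expdecay_lemB hb ha (by positivity : (0:ℝ) < (n : ℝ) * Real.exp (-a * i)) hbl
    refine le_trans this (le_of_eq ?_)
    simp only [hF]
    rw [mul_sub]
    congr 3
    have hcast : ((i - 1 : ℕ) : ℝ) = (i : ℝ) - 1 := by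
      have : (1 : ℕ) ≤ i := hi1'
      push_cast [this]
      ring
    rw [hcast, mul_assoc, ← Real.exp_add]
    ring_nf
  have hmid : ∀ i ∈ Finset.Ioc p q,
      ((n : ℝ) * Real.exp (-a * i)) / (b + (n : ℝ) * Real.exp (-a * i)) ^ 2
        ≤ 1 / (4 * b) := by
    intro i _
    exact expdecay_lemC hb (by positivity)
  -- split the sum
  have hpq : p ≤ q := by
    have : (K - 1).toNat ≤ (K + 1).toNat := by omega
    omega
  have hqr : q ≤ r := by omega
  have hsplit : Finset.Icc 1 r = Finset.Ioc 0 r := Finset.Icc_add_one_left_eq_Ioc 0 r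
  rw [hsplit, ← Finset.sum_Ioc_consecutive _ (Nat.zero_le q) hqr,
    ← Finset.sum_Ioc_consecutive _ (Nat.zero_le p) hpq]
  -- bound the three pieces
  have hS1 : ∑ i ∈ Finset.Ioc 0 p,
      ((n : ℝ) * Real.exp (-a * i)) / (b + (n : ℝ) * Real.exp (-a * i)) ^ 2
        ≤ F (p + 1) - F 1 := by
    calc _ ≤ ∑ i ∈ Finset.Ioc 0 p, (F (i + 1) - F i) := Finset.sum_le_sum hfwd
      _ = F (p + 1) - F 1 := expdecay_tel1 F p
  have hS3 : ∑ i ∈ Finset.Ioc q r,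
      ((n : ℝ) * Real.exp (-a * i)) / (b + (n : ℝ) * Real.exp (-a * i)) ^ 2
        ≤ F r - F q := by
    calc _ ≤ ∑ i ∈ Finset.Ioc q r, (F i - F (i - 1)) := Finset.sum_le_sum hbwd
      _ = F r - F q := expdecay_tel2 F q r hqr
  have hS2 : ∑ i ∈ Finset.Ioc p q,
      ((n : ℝ) * Real.exp (-a * i)) / (b + (n : ℝ) * Real.exp (-a * i)) ^ 2
        ≤ 1 / (2 * b) := by
    have hcard : (Finset.Ioc p q).card ≤ 2 := by
      rw [Nat.card_Ioc]
      omega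
    calc _ ≤ (Finset.Ioc p q).card • (1 / (4 * b)) :=
          Finset.sum_le_card_nsmul _ _ _ hmid
      _ = ((Finset.Ioc p q).card : ℝ) * (1 / (4 * b)) := by rw [nsmul_eq_mul]
      _ ≤ 2 * (1 / (4 * b)) := by
          apply mul_le_mul_of_nonneg_right _ (by positivity)
          exact_mod_cast hcard
      _ = 1 / (2 * b) := by field_simp; ring
  -- identify the RHS with F (r+1) - F 0 + 1/(2b)
  have hRHS : (1 / a) * (1 / (b + (n : ℝ) * Real.exp (-a * ((r : ℝ) + 1))) - 1 / (b + (n : ℝ)))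
      = F (r + 1) - F 0 := by
    simp only [hF]
    rw [mul_sub]
    congr 2
    · push_cast; ring_nf
    · norm_num
  rw [hRHS]
  -- final combination
  have hmain : F (p + 1) - F 1 + (F r - F q) ≤ F (r + 1) - F 0 := by
    have h01 : F 0 ≤ F 1 := hFmono 0 1 (by omega)
    have hrr : F r ≤ F (r + 1) := hFmono r (r + 1) (by omega)
    rcases lt_or_eq_of_le hpq with hlt | heq
    · have : F (p + 1) ≤ F q := hFmono (p + 1) q (by omega)
      linarith
    · -- p = q : then p = 0 or p = r
      have hcase : p = 0 ∨ p = r := by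
        have h1 := Int.self_le_toNat (K + 1)
        have h2 := Int.self_le_toNat (K - 1)
        omega
      rcases hcase with h0 | hR
      · have hq0 : q = 0 := by omega
        rw [h0, hq0]
        simp
        linarith
      · have hqR : q = r := by omega
        rw [hR, hqR]
        linarith
  linarith
end
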